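/- Define a sequence of polynomials A_i ∈ ℕ[x, y, z] by A_0(x, y, z) = x and A_{i+1}(x, y, z) = x + A_i(x² + xy + yz, x, xy). Then for every n ≥ 1 the coefficient of x^n in A_i(x, 0, 0) is eventually constant as i → ∞, and this eventual value equals the number of maximal balanced trees with exactly n leaves. -/

import Mathlib

/-- Complete rooted planar binary trees. -/
inductive BTree where
  | leaf : BTree
  | node : BTree → BTree → BTree
  deriving DecidableEq

namespace BTree

/-- The height of a tree. -/
def ht : BTree → ℕ
  | leaf => 0
  | node l r => 1 + max l.ht r.ht

/-- The imbalance value of the root of a tree (`γ`). -/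
def imb : BTree → ℤ
  | leaf => 0
  | node l r => (r.ht : ℤ) - l.ht

/-- A tree is balanced if every node has imbalance value in {-1, 0, 1}. -/
def Balanced : BTree → Prop
  | leaf => True
  | node l r =>
      ((r.ht : ℤ) - l.ht = -1 ∨ (r.ht : ℤ) - l.ht = 0 ∨ (r.ht : ℤ) - l.ht = 1) ∧
      Balanced l ∧ Balanced r

/-- The subtree at a position (`false` = go left, `true` = go right). -/
def subtreeAt : BTree → List Bool → Option BTree
  | t, [] => some t
  | leaf, _ :: _ => none
  | node l _, false :: p => subtreeAt l p
  | node _ r, true :: p => subtreeAt r p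

/-- `p` is the position of an internal node of `t`. -/
def IsNodePos (t : BTree) (p : List Bool) : Prop :=
  ∃ l r, subtreeAt t p = some (node l r)

/-- Right rotation whose root `y` is at position `p`: the subtree
`(A ∧ B) ∧ C` at `p` is replaced by `A ∧ (B ∧ C)`. -/
inductive RotAt : BTree → List Bool → BTree → Prop
  | here (a b c : BTree) : RotAt (node (node a b) c) [] (node a (node b c))
  | left {l l' : BTree} (r : BTree) {p : List Bool} :
      RotAt l p l' → RotAt (node l r) (false :: p) (node l' r)
  | right (l : BTree) {r r' : BTree} {p : List Bool} :
      RotAt r p r' → RotAt (node l r) (true :: p) (node l r')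

/-- `t₁` is obtained from `t₀` by a single right rotation (`t₀ ⋌ t₁`). -/
def Rot (t₀ t₁ : BTree) : Prop := ∃ p, RotAt t₀ p t₁

/-- The Tamari order: reflexive transitive closure of right rotation. -/
def Tamari : BTree → BTree → Prop := Relation.ReflTransGen Rot

/-- Number of leaves. -/
def leaves : BTree → ℕ
  | leaf => 1
  | node l r => l.leaves + r.leaves

/-- A balanced tree is maximal if every tree obtained from it by a right
rotation is unbalanced. -/
def MaximalBalanced (T : BTree) : Prop :=
  Balanced T ∧ ∀ T1 : BTree, Rot T T1 → ¬ Balanced T1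

open MvPolynomial in
/-- The sequence of polynomials `A_0(x, y, z) = x`,
`A_{i+1}(x, y, z) = x + A_i(x² + xy + yz, x, xy)`
(variables `0`, `1`, `2` are `x`, `y`, `z`). -/
noncomputable def maxSeq : ℕ → MvPolynomial (Fin 3) ℕ
  | 0 => X 0
  | i + 1 => X 0 + bind₁ ![X 0 ^ 2 + X 0 * X 1 + X 1 * X 2, X 0, X 0 * X 1] (maxSeq i)

section Part1


lemma leaves_pos : ∀ T : BTree, 1 ≤ T.leaves
  | leaf => le_refl 1
  | node l r => by
      have := leaves_pos l
      simp only [leaves]; omega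

lemma ht_lt_leaves : ∀ T : BTree, T.ht < T.leaves
  | leaf => by simp [ht, leaves]
  | node l r => by
      have hl := ht_lt_leaves l; have hr := ht_lt_leaves r
      simp only [ht, leaves]
      rcases le_total l.ht r.ht with h | h
      · rw [max_eq_right h]; omega
      · rw [max_eq_left h]; omega

/-- Boolean version of `Balanced`. -/
def balB : BTree → Bool
  | leaf => true
  | node l r => ((l.ht ≤ r.ht + 1 : Bool) && (r.ht ≤ l.ht + 1 : Bool)) && balB l && balB r

lemma balB_iff : ∀ T, balB T = true ↔ Balanced T
  | leaf => by simp [balB, Balanced]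
  | node l r => by
      simp only [balB, Bool.and_eq_true, decide_eq_true_eq, balB_iff l, balB_iff r, Balanced]
      constructor
      · rintro ⟨⟨⟨h1, h2⟩, hl⟩, hr⟩; exact ⟨by omega, hl, hr⟩
      · rintro ⟨h, hl, hr⟩; exact ⟨⟨by omega, hl⟩, hr⟩

/-- `qOK L` : `L` is an internal node with imbalance `+1`. -/
def qOK : BTree → Bool
  | leaf => false
  | node ll lr => lr.ht == ll.ht + 1

lemma qOK_iff (L : BTree) : qOK L = true ↔ ∃ A B, L = node A B ∧ B.ht = A.ht + 1 := by
  cases L with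
  | leaf => simp [qOK]
  | node A B =>
      simp only [qOK, beq_iff_eq]
      exact ⟨fun h => ⟨A, B, rfl, h⟩, by rintro ⟨_, _, ⟨⟩, h⟩; exact h⟩

/-- The extra condition for maximality: every node with imbalance `-1`
has a left child with imbalance `+1`. -/
def qB : BTree → Bool
  | leaf => true
  | node l r => ((!(l.ht == r.ht + 1)) || qOK l) && qB l && qB r


end Part1

mutual
/-- Derivability from the nonterminal `x` in exactly `j` steps. -/
def gx : ℕ → BTree → Bool
  | 0, leaf => true
  | 0, node _ _ => false
  | _ + 1, leaf => false
  | j + 1, node L R => (gx j L && gx j R) || (gy j L && gx j R) || (gz j L && gy j R)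
/-- Derivability from the nonterminal `y`. -/
def gy : ℕ → BTree → Bool
  | 0, _ => false
  | j + 1, T => gx j T
/-- Derivability from the nonterminal `z`. -/
def gz : ℕ → BTree → Bool
  | 0, _ => false
  | _ + 1, leaf => false
  | j + 1, node L R => gy j L && gx j R
end

lemma g_iff : ∀ (j : ℕ) (T : BTree),
    (gx j T = true ↔ Balanced T ∧ qB T = true ∧ T.ht = j) ∧
    (gy j T = true ↔ Balanced T ∧ qB T = true ∧ T.ht + 1 = j) ∧
    (gz j T = true ↔ Balanced T ∧ qB T = true ∧ T.ht = j ∧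
      ∃ A B, T = node A B ∧ B.ht = A.ht + 1) := by
  intro j
  induction j with
  | zero =>
      intro T
      cases T with
      | leaf => refine ⟨?_, ?_, ?_⟩ <;> simp [gx, gy, gz, Balanced, qB, ht]
      | node L R =>
          refine ⟨?_, ?_, ?_⟩
          · simp [gx, ht]
          · simp [gy, ht]
          · simp [gz, ht]
  | succ j ih =>
      intro T
      cases T with
      | leaf =>
          refine ⟨?_, ?_, ?_⟩
          · simp [gx, ht]
          · show gx j leaf = true ↔ _
            rw [(ih leaf).1]
            constructor
            · rintro ⟨a, b, c⟩; exact ⟨a, b, by omega⟩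
            · rintro ⟨a, b, c⟩; exact ⟨a, b, by omega⟩
          · simp [gz, ht]
      | node L R =>
          have hL := ih L
          have hR := ih R
          have hbal : Balanced (node L R) ↔
              (((R.ht : ℤ) - L.ht = -1 ∨ (R.ht : ℤ) - L.ht = 0 ∨ (R.ht : ℤ) - L.ht = 1) ∧
                Balanced L ∧ Balanced R) := Iff.rfl
          have hq : qB (node L R) = true ↔
              ((L.ht = R.ht + 1 → qOK L = true) ∧ qB L = true ∧ qB R = true) := by
            simp only [qB, Bool.and_eq_true, Bool.or_eq_true, Bool.not_eq_true',
              beq_eq_false_iff_ne, ne_eq]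
            constructor
            · rintro ⟨⟨h1, h2⟩, h3⟩
              exact ⟨fun h => h1.resolve_left (fun hh => hh h), h2, h3⟩
            · rintro ⟨h1, h2, h3⟩
              refine ⟨⟨?_, h2⟩, h3⟩
              by_cases h : L.ht = R.ht + 1
              · exact Or.inr (h1 h)
              · exact Or.inl h
          have hht : (node L R).ht = 1 + max L.ht R.ht := rfl
          refine ⟨?_, ?_, ?_⟩
          · -- x case
            show ((gx j L && gx j R) || (gy j L && gx j R) || (gz j L && gy j R)) = true ↔ _
            rw [hbal, hq]
            simp only [Bool.or_eq_true, Bool.and_eq_true, hL.1, hL.2.1, hL.2.2, hR.1, hR.2.1,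
              hht, qOK_iff]
            constructor
            · rintro ((⟨⟨bL, qL, eL⟩, bR, qR, eR⟩ | ⟨⟨bL, qL, eL⟩, bR, qR, eR⟩) |
                ⟨⟨bL, qL, eL, hz⟩, bR, qR, eR⟩)
              · exact ⟨⟨by omega, bL, bR⟩, ⟨fun h => by omega, qL, qR⟩, by omega⟩
              · exact ⟨⟨by omega, bL, bR⟩, ⟨fun h => by omega, qL, qR⟩, by omega⟩
              · exact ⟨⟨by omega, bL, bR⟩, ⟨fun _ => hz, qL, qR⟩, by omega⟩
            · rintro ⟨⟨hd, bL, bR⟩, ⟨hc, qL, qR⟩, he⟩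
              rcases Nat.le_total L.ht R.ht with hm | hm
              · rw [Nat.max_eq_right hm] at he
                rcases hd with hd | hd | hd
                · have h1 : L.ht = j := by omega
                  have h2 : R.ht + 1 = j := by omega
                  exact Or.inr ⟨⟨bL, qL, h1, hc (by omega)⟩, bR, qR, h2⟩
                · exact Or.inl (Or.inl ⟨⟨bL, qL, by omega⟩, bR, qR, by omega⟩)
                · exact Or.inl (Or.inr ⟨⟨bL, qL, by omega⟩, bR, qR, by omega⟩)
              · rw [Nat.max_eq_left hm] at he
                rcases hd with hd | hd | hd
                · have h1 : L.ht = j := by omega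
                  have h2 : R.ht + 1 = j := by omega
                  exact Or.inr ⟨⟨bL, qL, h1, hc (by omega)⟩, bR, qR, h2⟩
                · exact Or.inl (Or.inl ⟨⟨bL, qL, by omega⟩, bR, qR, by omega⟩)
                · exact Or.inl (Or.inr ⟨⟨bL, qL, by omega⟩, bR, qR, by omega⟩)
          · -- y case
            show gx j (node L R) = true ↔ _
            rw [(ih (node L R)).1]
            constructor
            · rintro ⟨b, q, e⟩; exact ⟨b, q, by omega⟩
            · rintro ⟨b, q, e⟩; exact ⟨b, q, by omega⟩
          · -- z case
            show (gy j L && gx j R) = true ↔ _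
            rw [hbal, hq]
            simp only [Bool.and_eq_true, hL.2.1, hR.1, hht]
            constructor
            · rintro ⟨⟨bL, qL, eL⟩, bR, qR, eR⟩
              refine ⟨⟨by omega, bL, bR⟩, ⟨fun h => by omega, qL, qR⟩, by omega,
                L, R, rfl, by omega⟩
            · rintro ⟨⟨hd, bL, bR⟩, ⟨hc, qL, qR⟩, he, A, B, hE, hAB⟩
              cases hE
              exact ⟨⟨bL, qL, by omega⟩, bR, qR, by omega⟩

lemma balanced_node_iff {L R : BTree} : Balanced (node L R) ↔
    (((R.ht : ℤ) - L.ht = -1 ∨ (R.ht : ℤ) - L.ht = 0 ∨ (R.ht : ℤ) - L.ht = 1) ∧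
      Balanced L ∧ Balanced R) := Iff.rfl

lemma qB_node_iff {L R : BTree} : qB (node L R) = true ↔
    ((L.ht = R.ht + 1 → qOK L = true) ∧ qB L = true ∧ qB R = true) := by
  simp only [qB, Bool.and_eq_true, Bool.or_eq_true, Bool.not_eq_true',
    beq_eq_false_iff_ne, ne_eq]
  constructor
  · rintro ⟨⟨h1, h2⟩, h3⟩
    exact ⟨fun h => h1.resolve_left (fun hh => hh h), h2, h3⟩
  · rintro ⟨h1, h2, h3⟩
    refine ⟨⟨?_, h2⟩, h3⟩
    by_cases h : L.ht = R.ht + 1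
    · exact Or.inr (h1 h)
    · exact Or.inl h

lemma rot_unbal : ∀ {T : BTree} {p : List Bool} {T1 : BTree}, RotAt T p T1 →
    Balanced T → qB T = true → ¬ Balanced T1 := by
  intro T p T1 hrot
  induction hrot with
  | here a b c =>
      intro hB hq hB1
      rw [balanced_node_iff] at hB hB1
      obtain ⟨h1, hab, -⟩ := hB
      rw [balanced_node_iff] at hab
      obtain ⟨h2, -, -⟩ := hab
      obtain ⟨h3, -, hbc⟩ := hB1
      rw [balanced_node_iff] at hbc
      obtain ⟨h4, -, -⟩ := hbc
      have hq' : (node a b).ht = c.ht + 1 → b.ht = a.ht + 1 := by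
        intro h
        have h5 := (qB_node_iff.mp hq).1 h
        simpa only [qOK, beq_iff_eq] using h5
      simp only [ht] at h1 h2 h3 h4 hq'
      rcases Nat.le_total a.ht b.ht with hm | hm
      · rw [Nat.max_eq_right hm] at h1 hq'
        rcases Nat.le_total b.ht c.ht with hm2 | hm2
        · rw [Nat.max_eq_right hm2] at h3; omega
        · rw [Nat.max_eq_left hm2] at h3; omega
      · rw [Nat.max_eq_left hm] at h1 hq'
        rcases Nat.le_total b.ht c.ht with hm2 | hm2
        · rw [Nat.max_eq_right hm2] at h3; omega
        · rw [Nat.max_eq_left hm2] at h3; omega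
  | left r h ih =>
      intro hB hq hB1
      exact ih hB.2.1 (qB_node_iff.mp hq).2.1 hB1.2.1
  | right l h ih =>
      intro hB hq hB1
      exact ih hB.2.2 (qB_node_iff.mp hq).2.2 hB1.2.2

lemma exists_rot : ∀ T : BTree, Balanced T → qB T = false →
    ∃ T1, Rot T T1 ∧ Balanced T1 ∧ T1.ht = T.ht
  | leaf => by intro _ h; simp [qB] at h
  | node L R => by
      intro hB hq
      rw [balanced_node_iff] at hB
      obtain ⟨h1, hL, hR⟩ := hB
      by_cases hqL : qB L = true
      · by_cases hqR : qB R = true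
        · -- the root condition fails
          have hroot : ¬ (L.ht = R.ht + 1 → qOK L = true) := by
            intro hc
            have h5 : qB (node L R) = true := qB_node_iff.mpr ⟨hc, hqL, hqR⟩
            rw [hq] at h5; exact Bool.false_ne_true h5
          push_neg at hroot
          obtain ⟨hht, hqok⟩ := hroot
          cases L with
          | leaf => simp [ht] at hht
          | node A B =>
              rw [balanced_node_iff] at hL
              obtain ⟨h2, hA, hB'⟩ := hL
              have hab : ¬ B.ht = A.ht + 1 := by
                intro h; exact hqok (by simp [qOK, h])
              have hBA : B.ht ≤ A.ht := by rcases h2 with h | h | h <;> omega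
              have hht' : A.ht = R.ht := by
                simp only [ht, Nat.max_eq_left hBA] at hht; omega
              have hBR : B.ht ≤ R.ht := hBA.trans hht'.le
              refine ⟨node A (node B R), ⟨[], RotAt.here A B R⟩, ?_, ?_⟩
              · rw [balanced_node_iff, balanced_node_iff]
                refine ⟨?_, hA, ?_, hB', hR⟩
                · simp only [ht, Nat.max_eq_right hBR]
                  push_cast
                  omega
                · omega
              · simp only [ht, Nat.max_eq_right hBR, Nat.max_eq_left hBA,
                  Nat.max_eq_right (show A.ht ≤ 1 + R.ht by omega),
                  Nat.max_eq_left (show R.ht ≤ 1 + A.ht by omega)]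
                omega
        · -- recurse into R
          obtain ⟨R1, ⟨p, hp⟩, hbR1, hhR1⟩ :=
            exists_rot R hR (Bool.eq_false_iff.mpr hqR)
          refine ⟨node L R1, ⟨true :: p, RotAt.right L hp⟩, ?_, ?_⟩
          · rw [balanced_node_iff]; exact ⟨by rw [hhR1]; exact h1, hL, hbR1⟩
          · simp only [ht, hhR1]
      · -- recurse into L
        obtain ⟨L1, ⟨p, hp⟩, hbL1, hhL1⟩ :=
          exists_rot L hL (Bool.eq_false_iff.mpr hqL)
        refine ⟨node L1 R, ⟨false :: p, RotAt.left R hp⟩, ?_, ?_⟩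
        · rw [balanced_node_iff]; exact ⟨by rw [hhL1]; exact h1, hbL1, hR⟩
        · simp only [ht, hhL1]

/-- Characterization: a tree is maximal balanced iff it is balanced and
satisfies the structural condition `qB`. -/
theorem maximalBalanced_iff (T : BTree) :
    MaximalBalanced T ↔ Balanced T ∧ qB T = true := by
  constructor
  · rintro ⟨hB, hmax⟩
    refine ⟨hB, ?_⟩
    by_contra hq
    obtain ⟨T1, hrot, hbal, -⟩ := exists_rot T hB (Bool.eq_false_iff.mpr hq)
    exact hmax T1 hrot hbal
  · rintro ⟨hB, hq⟩
    exact ⟨hB, fun T1 ⟨p, hp⟩ => rot_unbal hp hB hq⟩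

/-- All trees of height at most `h`, as a finite set. -/
def enumLe : ℕ → Finset BTree
  | 0 => {leaf}
  | h + 1 => insert leaf ((enumLe h ×ˢ enumLe h).image fun p => node p.1 p.2)

lemma mem_enumLe : ∀ (h : ℕ) (T : BTree), T ∈ enumLe h ↔ T.ht ≤ h
  | 0, leaf => by simp [enumLe, ht]
  | 0, node L R => by simp [enumLe, ht]
  | h + 1, leaf => by simp [enumLe, ht]
  | h + 1, node L R => by
      simp only [enumLe, Finset.mem_insert, Finset.mem_image, Finset.mem_product, Prod.exists]
      constructor
      · rintro (h' | ⟨a, b, ⟨ha, hb⟩, heq⟩)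
        · exact absurd h' (by simp)
        · injection heq with e1 e2
          rw [e1] at ha; rw [e2] at hb
          have h1 := (mem_enumLe h L).mp ha
          have h2 := (mem_enumLe h R).mp hb
          simp only [ht]; omega
      · intro hh
        simp only [ht] at hh
        exact Or.inr ⟨L, R, ⟨(mem_enumLe h L).mpr (by omega),
          (mem_enumLe h R).mpr (by omega)⟩, rfl⟩

/-- Trees derivable from `x` in `j` steps. -/
def fgx (j : ℕ) : Finset BTree := (enumLe j).filter (fun T => gx j T = true)
/-- Trees derivable from `y` in `j` steps. -/
def fgy (j : ℕ) : Finset BTree := (enumLe j).filter (fun T => gy j T = true)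
/-- Trees derivable from `z` in `j` steps. -/
def fgz (j : ℕ) : Finset BTree := (enumLe j).filter (fun T => gz j T = true)

lemma mem_fgx {j : ℕ} {T : BTree} : T ∈ fgx j ↔ gx j T = true := by
  simp only [fgx, Finset.mem_filter, mem_enumLe, and_iff_right_iff_imp]
  intro h; have := ((g_iff j T).1.mp h).2.2; omega

lemma mem_fgy {j : ℕ} {T : BTree} : T ∈ fgy j ↔ gy j T = true := by
  simp only [fgy, Finset.mem_filter, mem_enumLe, and_iff_right_iff_imp]
  intro h; have := ((g_iff j T).2.1.mp h).2.2; omega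

lemma mem_fgz {j : ℕ} {T : BTree} : T ∈ fgz j ↔ gz j T = true := by
  simp only [fgz, Finset.mem_filter, mem_enumLe, and_iff_right_iff_imp]
  intro h; have := ((g_iff j T).2.2.mp h).2.2.1; omega

open MvPolynomial in
/-- The images of `X 0`, `X 1`, `X 2` under the `j`-fold substitution,
specialized at `y = z = 0`. -/
noncomputable def qM : ℕ → Fin 3 → MvPolynomial ℕ ℕ
  | 0 => ![X 0, 0, 0]
  | j + 1 => ![qM j 0 ^ 2 + qM j 0 * qM j 1 + qM j 1 * qM j 2, qM j 0, qM j 0 * qM j 1]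

open MvPolynomial in
lemma sum_node (s t : Finset BTree) :
    (∑ L ∈ s, (X 0 : MvPolynomial ℕ ℕ) ^ L.leaves) * (∑ R ∈ t, (X 0 : MvPolynomial ℕ ℕ) ^ R.leaves)
      = ∑ T ∈ (s ×ˢ t).image (fun p => node p.1 p.2), (X 0 : MvPolynomial ℕ ℕ) ^ T.leaves := by
  have hinj : ∀ x ∈ s ×ˢ t, ∀ y ∈ s ×ˢ t,
      (fun p : BTree × BTree => node p.1 p.2) x = (fun p : BTree × BTree => node p.1 p.2) y →
        x = y := by
    rintro ⟨a, b⟩ - ⟨c, d⟩ - h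
    injection h with h1 h2
    exact Prod.ext h1 h2
  rw [Finset.sum_image hinj, Finset.sum_mul_sum, Finset.sum_product]
  simp only [leaves, pow_add]

lemma fgx_zero : fgx 0 = {leaf} := by
  ext T; cases T <;> simp [mem_fgx, gx]

lemma fgy_zero : fgy 0 = ∅ := by
  ext T; simp [mem_fgy, gy]

lemma fgz_zero : fgz 0 = ∅ := by
  ext T; simp [mem_fgz, gz]

lemma fgy_succ (j : ℕ) : fgy (j + 1) = fgx j := by
  ext T; rw [mem_fgy, mem_fgx]; rfl

lemma fgz_succ (j : ℕ) : fgz (j + 1) = (fgy j ×ˢ fgx j).image (fun p => node p.1 p.2) := by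
  ext T
  rw [mem_fgz]
  cases T with
  | leaf => simp [gz]
  | node L R =>
      show (gy j L && gx j R) = true ↔ _
      simp only [Bool.and_eq_true, Finset.mem_image, Finset.mem_product, Prod.exists]
      constructor
      · rintro ⟨h1, h2⟩
        exact ⟨L, R, ⟨mem_fgy.mpr h1, mem_fgx.mpr h2⟩, rfl⟩
      · rintro ⟨a, b, ⟨ha, hb⟩, heq⟩
        injection heq with e1 e2; subst e1; subst e2
        exact ⟨mem_fgy.mp ha, mem_fgx.mp hb⟩

lemma fgx_succ (j : ℕ) : fgx (j + 1) =
    ((fgx j ×ˢ fgx j).image (fun p => node p.1 p.2) ∪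
      (fgy j ×ˢ fgx j).image (fun p => node p.1 p.2)) ∪
      (fgz j ×ˢ fgy j).image (fun p => node p.1 p.2) := by
  ext T
  rw [mem_fgx]
  cases T with
  | leaf => simp [gx]
  | node L R =>
      show ((gx j L && gx j R) || (gy j L && gx j R) || (gz j L && gy j R)) = true ↔ _
      simp only [Bool.or_eq_true, Bool.and_eq_true, Finset.mem_union, Finset.mem_image,
        Finset.mem_product, Prod.exists]
      constructor
      · rintro ((⟨h1, h2⟩ | ⟨h1, h2⟩) | ⟨h1, h2⟩)
        · exact Or.inl (Or.inl ⟨L, R, ⟨mem_fgx.mpr h1, mem_fgx.mpr h2⟩, rfl⟩)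
        · exact Or.inl (Or.inr ⟨L, R, ⟨mem_fgy.mpr h1, mem_fgx.mpr h2⟩, rfl⟩)
        · exact Or.inr ⟨L, R, ⟨mem_fgz.mpr h1, mem_fgy.mpr h2⟩, rfl⟩
      · rintro ((⟨a, b, ⟨ha, hb⟩, heq⟩ | ⟨a, b, ⟨ha, hb⟩, heq⟩) | ⟨a, b, ⟨ha, hb⟩, heq⟩) <;>
          (injection heq with e1 e2; subst e1; subst e2)
        · exact Or.inl (Or.inl ⟨mem_fgx.mp ha, mem_fgx.mp hb⟩)
        · exact Or.inl (Or.inr ⟨mem_fgy.mp ha, mem_fgx.mp hb⟩)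
        · exact Or.inr ⟨mem_fgz.mp ha, mem_fgy.mp hb⟩

lemma ht_of_gx {j : ℕ} {T : BTree} (h : gx j T = true) : T.ht = j :=
  ((g_iff j T).1.mp h).2.2
lemma ht_of_gy {j : ℕ} {T : BTree} (h : gy j T = true) : T.ht + 1 = j :=
  ((g_iff j T).2.1.mp h).2.2
lemma ht_of_gz {j : ℕ} {T : BTree} (h : gz j T = true) : T.ht = j :=
  ((g_iff j T).2.2.mp h).2.2.1

lemma disj1 (j : ℕ) : Disjoint ((fgx j ×ˢ fgx j).image (fun p => node p.1 p.2))
    ((fgy j ×ˢ fgx j).image (fun p => node p.1 p.2)) := by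
  rw [Finset.disjoint_left]
  rintro T hT1 hT2
  simp only [Finset.mem_image, Finset.mem_product, Prod.exists] at hT1 hT2
  obtain ⟨a, b, ⟨ha, hb⟩, rfl⟩ := hT1
  obtain ⟨c, d, ⟨hc, hd⟩, heq⟩ := hT2
  injection heq with e1 e2
  have h1 := ht_of_gx (mem_fgx.mp ha)
  have h2 := ht_of_gy (mem_fgy.mp hc)
  rw [e1] at h2; omega

lemma disj2 (j : ℕ) : Disjoint
    (((fgx j ×ˢ fgx j).image (fun p => node p.1 p.2)) ∪
      ((fgy j ×ˢ fgx j).image (fun p => node p.1 p.2)))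
    ((fgz j ×ˢ fgy j).image (fun p => node p.1 p.2)) := by
  rw [Finset.disjoint_left]
  rintro T hT1 hT2
  simp only [Finset.mem_union, Finset.mem_image, Finset.mem_product, Prod.exists] at hT1 hT2
  obtain ⟨c, d, ⟨hc, hd⟩, heq⟩ := hT2
  have h2 := ht_of_gy (mem_fgy.mp hd)
  rcases hT1 with ⟨a, b, ⟨ha, hb⟩, heq'⟩ | ⟨a, b, ⟨ha, hb⟩, heq'⟩ <;>
    (rw [← heq'] at heq; injection heq with e1 e2;
     have h1 := ht_of_gx (mem_fgx.mp hb); rw [e2] at h2; omega)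

open MvPolynomial in
lemma qM_sum : ∀ j, (qM j 0 = ∑ T ∈ fgx j, (X 0 : MvPolynomial ℕ ℕ) ^ T.leaves)
    ∧ (qM j 1 = ∑ T ∈ fgy j, (X 0 : MvPolynomial ℕ ℕ) ^ T.leaves)
    ∧ (qM j 2 = ∑ T ∈ fgz j, (X 0 : MvPolynomial ℕ ℕ) ^ T.leaves) := by
  intro j
  induction j with
  | zero =>
      refine ⟨?_, ?_, ?_⟩
      · rw [fgx_zero]
        show X 0 = _
        rw [Finset.sum_singleton]
        simp [leaves]
      · rw [fgy_zero, Finset.sum_empty]; rfl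
      · rw [fgz_zero, Finset.sum_empty]; rfl
  | succ j ih =>
      obtain ⟨hx, hy, hz⟩ := ih
      refine ⟨?_, ?_, ?_⟩
      · show qM j 0 ^ 2 + qM j 0 * qM j 1 + qM j 1 * qM j 2 = _
        rw [fgx_succ, Finset.sum_union (disj2 j), Finset.sum_union (disj1 j)]
        rw [pow_two, show qM j 0 * qM j 1 = qM j 1 * qM j 0 from mul_comm _ _,
          show qM j 1 * qM j 2 = qM j 2 * qM j 1 from mul_comm _ _, hx, hy, hz]
        rw [sum_node, sum_node, sum_node]
      · show qM j 0 = _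
        rw [fgy_succ]; exact hx
      · show qM j 0 * qM j 1 = _
        rw [fgz_succ, show qM j 0 * qM j 1 = qM j 1 * qM j 0 from mul_comm _ _, hx, hy, sum_node]

open MvPolynomial in
/-- The substitution `x ↦ x² + xy + yz, y ↦ x, z ↦ xy` as a ring hom. -/
noncomputable def phiR : MvPolynomial (Fin 3) ℕ →+* MvPolynomial (Fin 3) ℕ :=
  (bind₁ ![X 0 ^ 2 + X 0 * X 1 + X 1 * X 2, X 0, X 0 * X 1]).toRingHom

open MvPolynomial in
/-- The substitution `y ↦ 0, z ↦ 0` as a ring hom. -/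
noncomputable def evR : MvPolynomial (Fin 3) ℕ →+* MvPolynomial ℕ ℕ :=
  (bind₁ (![X 0, 0, 0] : Fin 3 → MvPolynomial ℕ ℕ)).toRingHom

open MvPolynomial in
lemma maxSeq_eq_sum :
    ∀ i, ∀ (χ : MvPolynomial (Fin 3) ℕ →+* MvPolynomial ℕ ℕ),
      χ (maxSeq i) = ∑ j ∈ Finset.range (i + 1), χ ((phiR ^ j) (X 0)) := by
  intro i
  induction i with
  | zero =>
      intro χ
      simp [maxSeq]
  | succ i ih =>
      intro χ
      have h1 : maxSeq (i + 1) = X 0 + phiR (maxSeq i) := rfl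
      have h2 : ∀ j, (χ.comp phiR) ((phiR ^ j) (X 0)) = χ ((phiR ^ (j + 1)) (X 0)) := by
        intro j
        rw [RingHom.comp_apply, pow_succ', RingHom.mul_def, RingHom.comp_apply]
      rw [h1, map_add, ← RingHom.comp_apply, ih (χ.comp phiR)]
      conv_rhs => rw [Finset.sum_range_succ']
      simp only [h2, pow_zero, RingHom.coe_one, id_eq]
      exact add_comm _ _

open MvPolynomial in
lemma chi_pow : ∀ j, evR ((phiR ^ j) (X 0)) = qM j 0 ∧ evR ((phiR ^ j) (X 1)) = qM j 1 ∧
    evR ((phiR ^ j) (X 2)) = qM j 2 := by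
  intro j
  induction j with
  | zero =>
      refine ⟨?_, ?_, ?_⟩ <;>
        simp [evR, bind₁_X_right, qM, Matrix.cons_val_zero, Matrix.cons_val_one,
          Matrix.head_cons]
  | succ j ih =>
      obtain ⟨h0, h1, h2⟩ := ih
      have key : ∀ v : Fin 3, (phiR ^ (j + 1)) (X v) = (phiR ^ j) (phiR (X v)) := by
        intro v
        rw [pow_succ, RingHom.mul_def, RingHom.comp_apply]
      have hphi0 : phiR (X 0) = X 0 ^ 2 + X 0 * X 1 + X 1 * X 2 := by
        show (bind₁ _) (X 0) = _
        rw [bind₁_X_right]; rfl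
      have hphi1 : phiR (X 1) = X 0 := by
        show (bind₁ _) (X 1) = _
        rw [bind₁_X_right]; rfl
      have hphi2 : phiR (X 2) = X 0 * X 1 := by
        show (bind₁ _) (X 2) = _
        rw [bind₁_X_right]; rfl
      refine ⟨?_, ?_, ?_⟩
      · rw [key 0, hphi0, ← RingHom.comp_apply, map_add, map_add, map_pow, map_mul, map_mul]
        simp only [RingHom.comp_apply, h0, h1, h2]
        rfl
      · rw [key 1, hphi1, ← RingHom.comp_apply]
        simp only [RingHom.comp_apply, h0]
        rfl
      · rw [key 2, hphi2, ← RingHom.comp_apply, map_mul]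
        simp only [RingHom.comp_apply, h0, h1]
        rfl

open MvPolynomial in
lemma coeff_qM (j n : ℕ) : coeff (Finsupp.single (0 : ℕ) n) (qM j 0) =
    ((fgx j).filter (fun T => T.leaves = n)).card := by
  rw [(qM_sum j).1, coeff_sum, Finset.card_filter]
  refine Finset.sum_congr rfl fun T _ => ?_
  rw [coeff_X_pow]
  simp only [(Finsupp.single_injective (0 : ℕ)).eq_iff]

open MvPolynomial in
theorem maxSeq_coeff_eventually_counts_maximal' (n : ℕ) (hn : 1 ≤ n) :
    ∃ N : ℕ, ∀ i ≥ N,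
      coeff (Finsupp.single 0 n) (bind₁ ![X 0, 0, 0] (maxSeq i)) =
        Nat.card {T : BTree // MaximalBalanced T ∧ T.leaves = n} := by
  classical
  set mb : Finset BTree := (enumLe n).filter
    (fun T => balB T = true ∧ qB T = true ∧ T.leaves = n) with hmb
  have hmem : ∀ T : BTree, (MaximalBalanced T ∧ T.leaves = n) ↔ T ∈ mb := by
    intro T
    rw [hmb, Finset.mem_filter, mem_enumLe, maximalBalanced_iff, ← balB_iff]
    constructor
    · rintro ⟨⟨hB, hq⟩, hl⟩
      have h1 := ht_lt_leaves T
      exact ⟨by omega, hB, hq, hl⟩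
    · rintro ⟨-, hB, hq, hl⟩
      exact ⟨⟨hB, hq⟩, hl⟩
  have hcard : Nat.card {T : BTree // MaximalBalanced T ∧ T.leaves = n} = mb.card := by
    rw [Nat.card_congr (Equiv.subtypeEquivRight hmem), Nat.card_eq_finsetCard]
  have hslice : ∀ j : ℕ, ((fgx j).filter (fun T => T.leaves = n)).card =
      (mb.filter (fun T => T.ht = j)).card := by
    intro j
    congr 1
    ext T
    simp only [Finset.mem_filter, mem_fgx, hmb, mem_enumLe]
    constructor
    · rintro ⟨hg, hl⟩
      obtain ⟨hB, hq, hh⟩ := (g_iff j T).1.mp hg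
      have h1 := ht_lt_leaves T
      exact ⟨⟨by omega, (balB_iff T).mpr hB, hq, hl⟩, hh⟩
    · rintro ⟨⟨-, hB, hq, hl⟩, hh⟩
      exact ⟨(g_iff j T).1.mpr ⟨(balB_iff T).mp hB, hq, hh⟩, hl⟩
  refine ⟨n, fun i hi => ?_⟩
  show coeff (Finsupp.single (0 : ℕ) n) (evR (maxSeq i)) =
    Nat.card {T : BTree // MaximalBalanced T ∧ T.leaves = n}
  rw [maxSeq_eq_sum i evR, coeff_sum]
  have hterm : ∀ j ∈ Finset.range (i + 1),
      coeff (Finsupp.single (0 : ℕ) n) (evR ((phiR ^ j) (X 0))) =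
        (mb.filter (fun T => T.ht = j)).card := by
    intro j _
    rw [(chi_pow j).1, coeff_qM, hslice]
  rw [Finset.sum_congr rfl hterm, hcard]
  have hbi : mb = (Finset.range (i + 1)).biUnion (fun j => mb.filter (fun T => T.ht = j)) := by
    ext T
    simp only [Finset.mem_biUnion, Finset.mem_range]
    constructor
    · intro hT
      have hT' := hT
      rw [hmb, Finset.mem_filter] at hT'
      have h1 := ht_lt_leaves T
      have h2 : T.leaves = n := hT'.2.2.2
      exact ⟨T.ht, by omega, Finset.mem_filter.mpr ⟨hT, rfl⟩⟩
    · rintro ⟨j, -, hT⟩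
      exact (Finset.mem_filter.mp hT).1
  conv_rhs => rw [hbi]
  rw [Finset.card_biUnion]
  rintro x - y - hxy
  rw [Function.onFun, Finset.disjoint_left]
  rintro T hT1 hT2
  rw [Finset.mem_filter] at hT1 hT2
  exact hxy (hT1.2 ▸ hT2.2)

open MvPolynomial in
/-- For every `n ≥ 1`, the coefficient of `x^n` in `A_i(x, 0, 0)` is eventually
constant as `i → ∞`, and its eventual value is the number of maximal balanced
trees with exactly `n` leaves. -/
theorem maxSeq_coeff_eventually_counts_maximal (n : ℕ) (hn : 1 ≤ n) :
    ∃ N : ℕ, ∀ i ≥ N,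
      coeff (Finsupp.single 0 n) (bind₁ ![X 0, 0, 0] (maxSeq i)) =
        Nat.card {T : BTree // MaximalBalanced T ∧ T.leaves = n} := by
  exact maxSeq_coeff_eventually_counts_maximal' n hn

end BTree
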